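/- arXiv:1611.07682 — 6 statements merged into one kernel-verified Lean document; each statement's English description precedes it below -/
import Mathlib

section
/- Let I = (K_n^*, s, t, c, Q) be a QSPP instance with n ≥ 4, c = 0, and q_{ef} = 0 for every pair of arcs not contained together in any s-t path. If I is linearizable, then CP_k ≤ CP_{k+1} / (n−k−1) for every k = 2, …, n−2. -/
/-- An `s`-`t` path in the digraph on vertex type `V` with arc relation `A`,
represented as the list of its (distinct) vertices. -/
def IsPath {V : Type*} (A : V → V → Prop) (s t : V) (P : List V) : Prop :=
  2 ≤ P.length ∧ P.head? = some s ∧ P.getLast? = some t ∧ P.Nodup ∧ P.Chain' A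

/-- The arcs traversed by a path, as the list of ordered pairs of consecutive vertices. -/
def arcsOf {V : Type*} (P : List V) : List (V × V) :=
  P.zip P.tail

/-- Linear cost `C(P,c)` of a path. -/
noncomputable def linCost {V : Type*} (c : V × V → ℝ) (P : List V) : ℝ :=
  ((arcsOf P).map c).sum

/-- Total (quadratic) cost `C(P,c,Q)` of a path: the sum of the interaction costs over all
ordered pairs of arcs of `P` plus the sum of the linear costs of the arcs of `P`. -/
noncomputable def cost {V : Type*} (c : V × V → ℝ) (Q : V × V → V × V → ℝ)
    (P : List V) : ℝ :=
  ((arcsOf P).map fun e => ((arcsOf P).map fun f => Q e f).sum).sum + linCost c P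

/-- A QSPP instance `(G,s,t,c,Q)` is linearizable if there is a nonnegative cost vector `c'`
such that `C(P,c,Q) = C(P,c')` for every `s`-`t` path `P`. -/
def Linearizable {V : Type*} (A : V → V → Prop) (s t : V) (c : V × V → ℝ)
    (Q : V × V → V × V → ℝ) : Prop :=
  ∃ c' : V × V → ℝ, (∀ e, 0 ≤ c' e) ∧
    ∀ P, IsPath A s t P → cost c Q P = linCost c' P

/-- The arc relation of the complete symmetric digraph `K_n^*` on vertices `1,…,n`
with source `1` and target `n`, from which the incoming arcs of the source, the
outgoing arcs of the target and the arc from source to target have been removed. -/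
def knArc (n : ℕ) : ℕ → ℕ → Prop := fun i j =>
  1 ≤ i ∧ i ≤ n ∧ 1 ≤ j ∧ j ≤ n ∧ i ≠ j ∧ j ≠ 1 ∧ i ≠ n ∧ ¬(i = 1 ∧ j = n)

/-- `CP_k`: the total cost (with zero linear costs) of all `s`-`t` paths of length `k`
in `K_n^*`. -/
noncomputable def CPsum (n : ℕ) (Q : ℕ × ℕ → ℕ × ℕ → ℝ) (k : ℕ) : ℝ :=
  ∑ᶠ (P : List ℕ) (_ : IsPath (knArc n) 1 n P ∧ P.length = k + 1),
    cost (fun _ => 0) Q P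

/-! ### Auxiliary lemmas -/

lemma arcsOf_cons_cons {V : Type*} (a b : V) (l : List V) :
    arcsOf (a :: b :: l) = (a, b) :: arcsOf (b :: l) := rfl

lemma arcsOf_singleton {V : Type*} (a : V) : arcsOf [a] = [] := rfl

lemma arcsOf_append {V : Type*} :
    ∀ (l m : List V) (hl : l ≠ []) (hm : m ≠ []),
      arcsOf (l ++ m) = arcsOf l ++ (l.getLast hl, m.head hm) :: arcsOf m
  | [], _, hl, _ => absurd rfl hl
  | [a], m, _, hm => by
      cases m with
      | nil => exact absurd rfl hm
      | cons x xs => simp [arcsOf_cons_cons, arcsOf_singleton]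
  | a :: b :: l, m, _, hm => by
      have := arcsOf_append (b :: l) m (by simp) hm
      simp only [List.cons_append, arcsOf_cons_cons] at *
      rw [this]
      simp

lemma arc_rel {V : Type*} {A : V → V → Prop} :
    ∀ {P : List V}, P.Chain' A → ∀ e ∈ arcsOf P, A e.1 e.2
  | [], _, e, he => by simp [arcsOf] at he
  | [a], _, e, he => by simp [arcsOf] at he
  | a :: b :: l, h, e, he => by
      unfold List.Chain' at h; rw [List.isChain_cons_cons] at h
      rw [arcsOf_cons_cons, List.mem_cons] at he
      rcases he with rfl | he
      · exact h.1
      · exact arc_rel h.2 e he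

lemma nodup_arcsOf {V : Type*} {P : List V} (h : P.Nodup) : (arcsOf P).Nodup := by
  have hmap : (arcsOf P).map Prod.snd = P.tail := by
    apply List.map_snd_zip
    cases P <;> simp
  have : ((arcsOf P).map Prod.snd).Nodup := hmap ▸ h.tail
  exact this.of_map _

lemma mem_bounds {n : ℕ} :
    ∀ {P : List ℕ}, P.Chain' (knArc n) → 2 ≤ P.length → ∀ x ∈ P, 1 ≤ x ∧ x ≤ n
  | [], _, hl, _, _ => by simp at hl
  | [a], _, hl, _, _ => by simp at hl
  | a :: b :: l, h, _, x, hx => by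
      unfold List.Chain' at h; rw [List.isChain_cons_cons] at h
      obtain ⟨h1, h2⟩ := h
      rcases List.mem_cons.1 hx with rfl | hx
      · exact ⟨h1.1, h1.2.1⟩
      · cases l with
        | nil => rcases List.mem_singleton.1 hx with rfl; exact ⟨h1.2.2.1, h1.2.2.2.1⟩
        | cons c l' => exact mem_bounds h2 (by simp) x hx

lemma pathsFinite (n m : ℕ) :
    {P : List ℕ | IsPath (knArc n) 1 n P ∧ P.length = m}.Finite := by
  have h := (List.finite_length_eq (Fin (n + 1)) m).image (List.map Fin.val)
  refine h.subset ?_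
  rintro P ⟨hP, hlen⟩
  have hb : ∀ x ∈ P, x < n + 1 :=
    fun x hx => Nat.lt_succ_of_le (mem_bounds hP.2.2.2.2 hP.1 x hx).2
  refine ⟨P.pmap (fun x h => (⟨x, h⟩ : Fin (n + 1))) hb, by simpa using hlen, ?_⟩
  simp [List.map_pmap]

lemma caseB {n k : ℕ} (hn : 4 ≤ n) {b : ℕ} {l : List ℕ}
    (hP : IsPath (knArc n) 1 n (1 :: b :: l)) (hlen : (1 :: b :: l).length = k + 1)
    {w : ℕ} (hw1 : 1 ≤ w) (hwn : w ≤ n) (hwP : w ∉ (1 :: b :: l))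
    {e : ℕ × ℕ} (he : e ∈ arcsOf (1 :: b :: l)) (he2 : e.2 = n) :
    IsPath (knArc n) 1 n (1 :: w :: b :: l) ∧ (1 :: w :: b :: l).length = k + 2 ∧
      e ∈ arcsOf (1 :: w :: b :: l) := by
  obtain ⟨hlen2, hhead, hlast, hnd, hch⟩ := hP
  unfold List.Chain' at hch; rw [List.isChain_cons_cons] at hch
  obtain ⟨hab, hch⟩ := hch
  have hmemn : n ∈ (1 : ℕ) :: b :: l := by
    have := List.dropLast_append_getLast? n hlast
    rw [← this]; simp
  have hw1' : w ≠ 1 := by rintro rfl; exact hwP (by simp)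
  have hwnn : w ≠ n := by rintro rfl; exact hwP hmemn
  have hwb : w ≠ b := by rintro rfl; exact hwP (by simp)
  have hwl : w ∉ l := fun h => hwP (by simp [h])
  refine ⟨⟨by simp, rfl, ?_, ?_, ?_⟩, by simpa using hlen, ?_⟩
  · rw [List.getLast?_cons_cons, List.getLast?_cons_cons]
    rw [List.getLast?_cons_cons] at hlast
    exact hlast
  · simp only [List.nodup_cons, List.mem_cons, not_or] at hnd ⊢
    simp only [List.mem_cons, not_or] at hwP
    exact ⟨⟨Ne.symm hw1', hnd.1⟩, ⟨hwP.2.1, hwP.2.2⟩, hnd.2⟩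
  · unfold List.Chain'; rw [List.isChain_cons_cons, List.isChain_cons_cons]
    obtain ⟨_, _, hb1, hbn, h1b, hbne1, _, hno⟩ := hab
    refine ⟨⟨le_refl 1, by omega, hw1, hwn, Ne.symm hw1', hw1', by omega, ?_⟩,
      ⟨hw1, hwn, hb1, hbn, hwb, hbne1, hwnn, ?_⟩, hch⟩
    · rintro ⟨-, rfl⟩; exact hwnn rfl
    · rintro ⟨rfl, -⟩; exact hw1' rfl
  · have hbn : b ≠ n := fun hb => hab.2.2.2.2.2.2.2 ⟨rfl, hb⟩
    rw [arcsOf_cons_cons] at he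
    rcases List.mem_cons.1 he with rfl | he
    · exact absurd he2 hbn
    · rw [arcsOf_cons_cons, arcsOf_cons_cons]
      exact List.mem_cons_of_mem _ (List.mem_cons_of_mem _ he)

lemma caseA {n k : ℕ} (hn : 4 ≤ n) {q : List ℕ} (hq : q ≠ [])
    (hP : IsPath (knArc n) 1 n (q ++ [n])) (hlen : (q ++ [n]).length = k + 1)
    {w : ℕ} (hw1 : 1 ≤ w) (hwn : w ≤ n) (hwP : w ∉ q ++ [n])
    {e : ℕ × ℕ} (he : e ∈ arcsOf (q ++ [n])) (he2 : e.2 ≠ n) :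
    IsPath (knArc n) 1 n (q ++ [w, n]) ∧ (q ++ [w, n]).length = k + 2 ∧
      e ∈ arcsOf (q ++ [w, n]) := by
  obtain ⟨hlen2, hhead, hlast, hnd, hch⟩ := hP
  unfold List.Chain' at hch; rw [List.isChain_append] at hch
  obtain ⟨hcq, -, hlink⟩ := hch
  have hqL : q.getLast hq ∈ q.getLast? := by
    rw [List.getLast?_eq_getLast_of_ne_nil hq]; rfl
  have hlk : knArc n (q.getLast hq) n := hlink _ hqL n (by simp)
  have hqLmem : q.getLast hq ∈ q := List.getLast_mem hq
  rw [List.nodup_append] at hnd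
  obtain ⟨hndq, -, hdisj⟩ := hnd
  have hnq : n ∉ q := fun h => hdisj n h n (by simp) rfl
  simp only [List.mem_append, List.mem_singleton, not_or] at hwP
  obtain ⟨hwq, hwnn⟩ := hwP
  have h1q : (1 : ℕ) ∈ q := by
    rw [List.head?_append_of_ne_nil _ hq] at hhead
    exact List.mem_of_mem_head? hhead
  have hw1' : w ≠ 1 := fun h => hwq (h ▸ h1q)
  refine ⟨⟨?_, ?_, ?_, ?_, ?_⟩, ?_, ?_⟩
  · simp
  · rw [List.head?_append_of_ne_nil _ hq]
    rw [List.head?_append_of_ne_nil _ hq] at hhead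
    exact hhead
  · rw [List.getLast?_append_of_ne_nil _ (by simp : ([w, n] : List ℕ) ≠ [])]
    simp
  · rw [List.nodup_append]
    refine ⟨hndq, by simp [hwnn], ?_⟩
    intro x hx
    intro y hx2 hxy
    subst hxy
    simp only [List.mem_cons, List.mem_singleton, List.not_mem_nil, or_false] at hx2
    rcases hx2 with rfl | rfl
    · exact hwq hx
    · exact hnq hx
  · unfold List.Chain'; rw [List.isChain_append]
    refine ⟨hcq, ?_, ?_⟩
    · rw [List.isChain_cons_cons]
      exact ⟨⟨hw1, hwn, by omega, le_refl n, hwnn, by omega, hwnn,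
        fun h => hw1' h.1⟩, List.isChain_singleton n⟩
    · intro x hx y hy
      have hx' : x = q.getLast hq := by
        rw [List.getLast?_eq_getLast_of_ne_nil hq] at hx
        simpa using hx.symm
      have hy' : y = w := by simpa using hy.symm
      subst hx' hy'
      obtain ⟨hq1, hq2, -, -, -, -, hq3, -⟩ := hlk
      exact ⟨hq1, hq2, hw1, hwn, fun h => hwq (h ▸ hqLmem), hw1', hq3,
        fun h => hwnn h.2⟩
  · simp only [List.length_append] at hlen ⊢
    simp at hlen ⊢
    omega
  · rw [arcsOf_append q [n] hq (by simp), arcsOf_singleton] at he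
    rw [List.mem_append] at he
    rcases he with he | he
    · rw [arcsOf_append q [w, n] hq (by simp)]
      exact List.mem_append_left _ he
    · simp at he
      exact absurd (by rw [he]) he2

open Finset in
lemma key_count (n k : ℕ) (hn : 4 ≤ n) (hk : 2 ≤ k) (hkn : k + 2 ≤ n) (e : ℕ × ℕ)
    (Tk Tk1 : Finset (List ℕ))
    (hTk : ∀ P, P ∈ Tk ↔ IsPath (knArc n) 1 n P ∧ P.length = k + 1)
    (hTk1 : ∀ P, P ∈ Tk1 ↔ IsPath (knArc n) 1 n P ∧ P.length = k + 2) :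
    (n - k - 1) * (Tk.filter (fun P => e ∈ arcsOf P)).card
      ≤ (Tk1.filter (fun P => e ∈ arcsOf P)).card := by
  classical
  set F := Tk.filter (fun P => e ∈ arcsOf P) with hF
  set D := F.sigma (fun P => Finset.Icc 1 n \ P.toFinset) with hD
  have hmemF : ∀ P ∈ F, IsPath (knArc n) 1 n P ∧ P.length = k + 1 ∧ e ∈ arcsOf P := by
    intro P hP
    rw [hF, Finset.mem_filter] at hP
    exact ⟨((hTk P).1 hP.1).1, ((hTk P).1 hP.1).2, hP.2⟩
  have hcardD : D.card = F.card * (n - k - 1) := by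
    have hstep : ∀ P ∈ F, (Finset.Icc 1 n \ P.toFinset).card = n - k - 1 := by
      intro P hP
      obtain ⟨hpath, hlen, -⟩ := hmemF P hP
      have hsub : P.toFinset ⊆ Finset.Icc 1 n := by
        intro x hx
        rw [List.mem_toFinset] at hx
        have := mem_bounds hpath.2.2.2.2 hpath.1 x hx
        rw [Finset.mem_Icc]; exact this
      rw [Finset.card_sdiff_of_subset hsub, List.toFinset_card_of_nodup hpath.2.2.2.1,
        Nat.card_Icc, hlen]
      omega
    rw [hD, Finset.card_sigma, Finset.sum_congr rfl hstep, Finset.sum_const, smul_eq_mul]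
  set Φ : ((_ : List ℕ) × ℕ) → List ℕ :=
    fun x => if e.2 = n then 1 :: x.2 :: x.1.tail else x.1.dropLast ++ [x.2, n] with hΦ
  have hmemD : ∀ x ∈ D, (IsPath (knArc n) 1 n x.1 ∧ x.1.length = k + 1 ∧ e ∈ arcsOf x.1)
      ∧ 1 ≤ x.2 ∧ x.2 ≤ n ∧ x.2 ∉ x.1 := by
    rintro ⟨P, w⟩ hx
    rw [hD, Finset.mem_sigma] at hx
    obtain ⟨hP, hw⟩ := hx
    rw [Finset.mem_sdiff, Finset.mem_Icc, List.mem_toFinset] at hw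
    exact ⟨hmemF P hP, hw.1.1, hw.1.2, hw.2⟩
  have hmaps : ∀ x ∈ D, Φ x ∈ Tk1.filter (fun P => e ∈ arcsOf P) := by
    rintro ⟨P, w⟩ hx
    obtain ⟨⟨hpath, hlen, he⟩, hw1, hwn, hwP⟩ := hmemD _ hx
    rw [Finset.mem_filter, hTk1]
    by_cases h2 : e.2 = n
    · obtain ⟨a, t, rfl⟩ : ∃ a t, P = a :: t := by
        cases P with
        | nil => simp only [List.length_nil, List.length_cons] at hlen; omega
        | cons a t => exact ⟨a, t, rfl⟩
      obtain ⟨b, l, rfl⟩ : ∃ b l, t = b :: l := by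
        cases t with
        | nil => simp only [List.length_nil, List.length_cons] at hlen; omega
        | cons b l => exact ⟨b, l, rfl⟩
      have ha : a = 1 := by simpa using hpath.2.1
      subst ha
      have := caseB hn hpath hlen hw1 hwn hwP he h2
      simp only [hΦ, if_pos h2]
      exact ⟨⟨this.1, this.2.1⟩, this.2.2⟩
    · have hPq : P.dropLast ++ [n] = P := List.dropLast_append_getLast? n hpath.2.2.1
      have hq : P.dropLast ≠ [] := by
        have : P.dropLast.length = k := by
          have := hlen; rw [List.length_dropLast, this]; omega
        intro hnil; rw [hnil] at this; simp at this; omega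
      have := caseA hn hq (hPq.symm ▸ hpath) (hPq.symm ▸ hlen) hw1 hwn
        (hPq.symm ▸ hwP) (hPq.symm ▸ he) h2
      simp only [hΦ, if_neg h2]
      exact ⟨⟨this.1, this.2.1⟩, this.2.2⟩
  have hinj : Set.InjOn Φ D := by
    rintro ⟨P₁, w₁⟩ h₁ ⟨P₂, w₂⟩ h₂ heq
    obtain ⟨⟨hpath₁, hlen₁, -⟩, -, -, -⟩ := hmemD _ h₁
    obtain ⟨⟨hpath₂, hlen₂, -⟩, -, -, -⟩ := hmemD _ h₂
    by_cases h2 : e.2 = n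
    · simp only [hΦ, if_pos h2] at heq
      simp only [List.cons.injEq, true_and] at heq
      obtain ⟨hw, ht⟩ := heq
      have e₁ : (1 : ℕ) :: P₁.tail = P₁ := List.cons_head?_tail hpath₁.2.1
      have e₂ : (1 : ℕ) :: P₂.tail = P₂ := List.cons_head?_tail hpath₂.2.1
      have : P₁ = P₂ := by rw [← e₁, ← e₂, ht]
      simp [this, hw]
    · simp only [hΦ, if_neg h2] at heq
      have hlq : P₁.dropLast.length = P₂.dropLast.length := by
        rw [List.length_dropLast, List.length_dropLast, hlen₁, hlen₂]
      obtain ⟨hq, hwn⟩ := List.append_inj heq hlq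
      have hw : w₁ = w₂ := by injection hwn with h1 _
      have e₁ : P₁.dropLast ++ [n] = P₁ := List.dropLast_append_getLast? n hpath₁.2.2.1
      have e₂ : P₂.dropLast ++ [n] = P₂ := List.dropLast_append_getLast? n hpath₂.2.2.1
      have : P₁ = P₂ := by rw [← e₁, ← e₂, hq]
      simp [this, hw]
  calc (n - k - 1) * F.card = D.card := by rw [hcardD, Nat.mul_comm]
    _ ≤ _ := Finset.card_le_card_of_injOn Φ hmaps hinj

/-- On `K_n^*` (`n ≥ 4`): if the instance is linearizable then
`CP_k ≤ CP_{k+1} / (n-k-1)` for every `k = 2,…,n-2`. -/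
theorem stmt_10 (n : ℕ) (hn : 4 ≤ n) (Q : ℕ × ℕ → ℕ × ℕ → ℝ)
    (hQ0 : ∀ e f, 0 ≤ Q e f) (hQs : ∀ e f, Q e f = Q f e) (hQd : ∀ e, Q e e = 0)
    (hQpath : ∀ e f,
      (¬ ∃ P, IsPath (knArc n) 1 n P ∧ e ∈ arcsOf P ∧ f ∈ arcsOf P) → Q e f = 0)
    (hlin : Linearizable (knArc n) 1 n (fun _ => 0) Q) :
    ∀ k, 2 ≤ k → k ≤ n - 2 →
      CPsum n Q k ≤ CPsum n Q (k + 1) / ((n : ℝ) - k - 1) := by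
  classical
  obtain ⟨c', hc'0, hc'⟩ := hlin
  intro k hk2 hkn
  have hkn' : k + 2 ≤ n := by omega
  have hpos : (0 : ℝ) < (n : ℝ) - k - 1 := by
    have : (k : ℝ) + 2 ≤ (n : ℝ) := by exact_mod_cast hkn'
    linarith
  rw [le_div_iff₀ hpos]
  -- convert CPsum into finite sums of linear costs
  have hconv : ∀ m, CPsum n Q m = ∑ P ∈ (pathsFinite n (m + 1)).toFinset, linCost c' P := by
    intro m
    have h1 : CPsum n Q m
        = ∑ P ∈ (pathsFinite n (m + 1)).toFinset, cost (fun _ => 0) Q P :=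
      finsum_mem_eq_finite_toFinset_sum _ _
    rw [h1]
    refine Finset.sum_congr rfl fun P hP => ?_
    rw [Set.Finite.mem_toFinset] at hP
    exact hc' P hP.1
  set E : Finset (ℕ × ℕ) := Finset.Icc 1 n ×ˢ Finset.Icc 1 n with hE
  -- expand linCost over arcs as a sum over E
  have hlinE : ∀ P, IsPath (knArc n) 1 n P →
      linCost c' P = ∑ e ∈ E, if e ∈ arcsOf P then c' e else 0 := by
    intro P hP
    have hsub : ∀ e ∈ arcsOf P, e ∈ E := by
      intro e heP
      have h := arc_rel hP.2.2.2.2 e heP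
      rw [hE, Finset.mem_product, Finset.mem_Icc, Finset.mem_Icc]
      exact ⟨⟨h.1, h.2.1⟩, ⟨h.2.2.1, h.2.2.2.1⟩⟩
    have hfe : E.filter (fun e => e ∈ arcsOf P) = (arcsOf P).toFinset := by
      ext e
      simp only [Finset.mem_filter, List.mem_toFinset]
      exact ⟨fun h => h.2, fun h => ⟨hsub e h, h⟩⟩
    rw [← Finset.sum_filter, hfe, List.sum_toFinset _ (nodup_arcsOf hP.2.2.2.1)]
    rfl
  -- the two path Finsets
  set Tk := (pathsFinite n (k + 1)).toFinset with hTkdef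
  set Tk1 := (pathsFinite n (k + 1 + 1)).toFinset with hTk1def
  have hTk : ∀ P, P ∈ Tk ↔ IsPath (knArc n) 1 n P ∧ P.length = k + 1 := by
    intro P; rw [hTkdef, Set.Finite.mem_toFinset]; rfl
  have hTk1 : ∀ P, P ∈ Tk1 ↔ IsPath (knArc n) 1 n P ∧ P.length = k + 2 := by
    intro P; rw [hTk1def, Set.Finite.mem_toFinset]; rfl
  -- rewrite both CPsums as sums over E
  have hsum : ∀ (T : Finset (List ℕ)), (∀ P ∈ T, IsPath (knArc n) 1 n P) →
      ∑ P ∈ T, linCost c' P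
        = ∑ e ∈ E, ((T.filter (fun P => e ∈ arcsOf P)).card : ℝ) * c' e := by
    intro T hT
    rw [Finset.sum_congr rfl (fun P hP => hlinE P (hT P hP)), Finset.sum_comm]
    refine Finset.sum_congr rfl fun e _ => ?_
    rw [← Finset.sum_filter, Finset.sum_const, nsmul_eq_mul]
  have hTkmem : ∀ P ∈ Tk, IsPath (knArc n) 1 n P := fun P hP => ((hTk P).1 hP).1
  have hTk1mem : ∀ P ∈ Tk1, IsPath (knArc n) 1 n P := fun P hP => ((hTk1 P).1 hP).1
  rw [hconv k, hconv (k + 1), hsum Tk hTkmem, hsum Tk1 hTk1mem, Finset.sum_mul]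
  refine Finset.sum_le_sum fun e _ => ?_
  have hkey := key_count n k hn hk2 hkn' e Tk Tk1 hTk hTk1
  have hcast : ((n : ℝ) - k - 1) = ((n - k - 1 : ℕ) : ℝ) := by
    rw [show n - k - 1 = n - (k + 1) from by omega, Nat.cast_sub (by omega : k + 1 ≤ n)]
    push_cast
    ring
  calc ((Tk.filter (fun P => e ∈ arcsOf P)).card : ℝ) * c' e * ((n : ℝ) - k - 1)
      = (((n - k - 1 : ℕ) * (Tk.filter (fun P => e ∈ arcsOf P)).card : ℕ) : ℝ) * c' e := by
        rw [hcast]; push_cast; ring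
    _ ≤ ((Tk1.filter (fun P => e ∈ arcsOf P)).card : ℝ) * c' e := by
        apply mul_le_mul_of_nonneg_right _ (hc'0 e)
        exact_mod_cast hkey
end

section
/- Let I = (K_n^*, s, t, c, Q) be a QSPP instance with n ≥ 5, c = 0, and q_{ef} = 0 for every pair of arcs not contained together in any s-t path. If I is linearizable, then CP_k ≤ (n−k)·((k−2)/(k−3))·CP_{k−1} for every k = 4, …, n−1. -/
namespace Stmt11

lemma length_arcsOf {V : Type*} (P : List V) : (arcsOf P).length = P.length - 1 := by
  simp only [arcsOf, List.length_zip, List.length_tail]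
  omega

lemma getElem_arcsOf {V : Type*} (P : List V) (j : ℕ) (hj : j < (arcsOf P).length) :
    (arcsOf P)[j] = (P[j]'(by rw [length_arcsOf] at hj; omega),
      P[j+1]'(by rw [length_arcsOf] at hj; omega)) := by
  simp only [arcsOf, List.getElem_zip, List.getElem_tail]

lemma mem_arcsOf {V : Type*} {P : List V} {e : V × V} :
    e ∈ arcsOf P ↔ ∃ j, ∃ h : j + 1 < P.length,
      P[j]'(by omega) = e.1 ∧ P[j+1] = e.2 := by
  rw [List.mem_iff_getElem]
  constructor
  · rintro ⟨j, hj, hje⟩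
    refine ⟨j, by rw [length_arcsOf] at hj; omega, ?_, ?_⟩ <;>
      rw [← hje, getElem_arcsOf]
  · rintro ⟨j, hj, h1, h2⟩
    refine ⟨j, by rw [length_arcsOf]; omega, ?_⟩
    rw [getElem_arcsOf]
    exact Prod.ext h1 h2

lemma head?_of_getElem {V : Type*} {P : List V} (h : 0 < P.length) :
    P.head? = some (P[0]) := by
  cases P with
  | nil => simp at h
  | cons a l => rfl

lemma getLast?_of_getElem {V : Type*} {P : List V} (h : 0 < P.length) :
    P.getLast? = some (P[P.length - 1]'(by omega)) := by
  have hne : P ≠ [] := by cases P <;> simp_all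
  rw [List.getLast?_eq_getLast hne, List.getLast_eq_getElem]

lemma chain'_getElem {V : Type*} {A : V → V → Prop} {P : List V} (h : P.Chain' A)
    {i : ℕ} (hi : i + 1 < P.length) : A (P[i]'(by omega)) P[i+1] := by
  change List.IsChain A P at h
  rw [List.isChain_iff_getElem] at h
  have := h i (by omega)
  simpa using this

lemma chain'_of_getElem {V : Type*} {A : V → V → Prop} {P : List V}
    (h : ∀ i (hi : i + 1 < P.length), A (P[i]'(by omega)) P[i+1]) : P.Chain' A := by
  change List.IsChain A P
  rw [List.isChain_iff_getElem]
  intro i hi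
  simpa using h i (by omega)

section PathFacts

variable {n : ℕ} {P : List ℕ} (hP : IsPath (knArc n) 1 n P)
include hP

lemma path_arc {i : ℕ} (hi : i + 1 < P.length) :
    knArc n (P[i]'(by omega)) P[i+1] :=
  chain'_getElem hP.2.2.2.2 hi

lemma path_zero : P[0]'(by have := hP.1; omega) = 1 := by
  have h0 : 0 < P.length := by have := hP.1; omega
  have := hP.2.1
  rw [head?_of_getElem h0] at this
  exact (Option.some.inj this)

lemma path_last : P[P.length - 1]'(by have := hP.1; omega) = n := by
  have h0 : 0 < P.length := by have := hP.1; omega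
  have := hP.2.2.1
  rw [getLast?_of_getElem h0] at this
  exact (Option.some.inj this)

lemma path_ne_one {i : ℕ} (h0 : 0 < i) (hi : i < P.length) : P[i] ≠ 1 := by
  have harc := path_arc hP (i := i - 1) (by omega)
  simp only [Nat.sub_add_cancel (by omega : 1 ≤ i)] at harc
  exact harc.2.2.2.2.2.1

lemma path_ne_top {i : ℕ} (hi : i + 1 < P.length) : P[i]'(by omega) ≠ n := by
  exact (path_arc hP hi).2.2.2.2.2.2.1

lemma path_bounds {i : ℕ} (hi : i < P.length) : 1 ≤ P[i] ∧ P[i] ≤ n := by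
  by_cases h : i + 1 < P.length
  · have := path_arc hP h
    exact ⟨this.1, this.2.1⟩
  · have h2 : 1 ≤ i := by have := hP.1; omega
    have harc := path_arc hP (i := i - 1) (by omega)
    simp only [Nat.sub_add_cancel (by omega : 1 ≤ i)] at harc
    exact ⟨harc.2.2.1, harc.2.2.2.1⟩

lemma path_internal {i : ℕ} (h0 : 0 < i) (hi : i + 1 < P.length) :
    2 ≤ P[i]'(by omega) ∧ P[i]'(by omega) ≤ n - 1 := by
  have hb := path_bounds hP (i := i) (by omega)
  have h1 := path_ne_one hP h0 (by omega)
  have h2 := path_ne_top hP hi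
  omega

lemma path_getElem_inj {i j : ℕ} (hi : i < P.length) (hj : j < P.length)
    (h : P[i] = P[j]) : i = j :=
  (List.Nodup.getElem_inj_iff hP.2.2.2.1).mp h

end PathFacts


lemma insertIdx_getElem_eraseIdx {V : Type*} (P : List V) (i : ℕ) (h : i < P.length) :
    (P.eraseIdx i).insertIdx i P[i] = P := by
  induction P generalizing i with
  | nil => simp at h
  | cons a l ih =>
    cases i with
    | zero => simp
    | succ m =>
      simp only [List.eraseIdx_cons_succ, List.getElem_cons_succ, List.insertIdx_succ_cons]
      rw [ih m (by simpa using h)]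

lemma not_mem_erase_self {V : Type*} {P : List V} (hnd : P.Nodup) {i : ℕ}
    (hi : i < P.length) : P[i] ∉ P.eraseIdx i := by
  intro hmem
  rw [List.mem_iff_getElem] at hmem
  obtain ⟨m, hm, hme⟩ := hmem
  have hlen := List.length_eraseIdx_add_one (l := P) hi
  by_cases hc : m < i
  · rw [List.getElem_eraseIdx_of_lt _ hc] at hme
    have := (List.Nodup.getElem_inj_iff hnd).mp hme
    omega
  · rw [List.getElem_eraseIdx_of_ge _ (by omega)] at hme
    have := (List.Nodup.getElem_inj_iff hnd).mp hme
    omega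

lemma arcs_mem_erase {V : Type*} {P : List V} {e : V × V} {i j : ℕ}
    (hj : j + 1 < P.length) (h1 : P[j]'(by omega) = e.1) (h2 : P[j+1] = e.2)
    (hij : i ≠ j) (hij' : i ≠ j + 1) (hi : i < P.length) :
    e ∈ arcsOf (P.eraseIdx i) := by
  rw [mem_arcsOf]
  have hlen : (P.eraseIdx i).length + 1 = P.length := List.length_eraseIdx_add_one hi
  by_cases hc : j < i
  · refine ⟨j, by omega, ?_, ?_⟩
    · rw [List.getElem_eraseIdx_of_lt _ (by omega)]; exact h1
    · rw [List.getElem_eraseIdx_of_lt _ (by omega)]; exact h2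
  · refine ⟨j - 1, by omega, ?_, ?_⟩
    · rw [List.getElem_eraseIdx_of_ge _ (by omega)]
      simp only [Nat.sub_add_cancel (by omega : 1 ≤ j)]
      exact h1
    · rw [List.getElem_eraseIdx_of_ge _ (by omega)]
      simp only [Nat.sub_add_cancel (by omega : 1 ≤ j)]
      exact h2

lemma erase_arc_pos {n : ℕ} {P : List ℕ} (hP : IsPath (knArc n) 1 n P) {e : ℕ × ℕ}
    {i j : ℕ} (hj : j + 1 < P.length) (h1 : P[j]'(by omega) = e.1) (h2 : P[j+1] = e.2)
    (hij : i ≠ j) (hij' : i ≠ j + 1) (hi : i < P.length)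
    {j' : ℕ} (hj' : j' + 1 < (P.eraseIdx i).length)
    (g1 : (P.eraseIdx i)[j']'(by omega) = e.1) (g2 : (P.eraseIdx i)[j'+1] = e.2) :
    i ≠ j' + 1 := by
  intro hiq
  have hlen : (P.eraseIdx i).length + 1 = P.length := List.length_eraseIdx_add_one hi
  have hg1 : (P[j']'(by omega)) = e.1 := by
    rw [List.getElem_eraseIdx_of_lt _ (by omega)] at g1; exact g1
  have hjj : j' = j := path_getElem_inj hP (by omega) (by omega) (hg1.trans h1.symm)
  have hg2 : (P[j'+1+1]'(by omega)) = e.2 := by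
    rw [List.getElem_eraseIdx_of_ge _ (by omega)] at g2; exact g2
  have : j' + 1 + 1 = j + 1 := path_getElem_inj hP (by omega) (by omega) (hg2.trans h2.symm)
  omega

lemma isPath_eraseIdx {n k : ℕ} (hk : 4 ≤ k) {P : List ℕ} (hP : IsPath (knArc n) 1 n P)
    (hlen : P.length = k + 1) {i : ℕ} (h1 : 1 ≤ i) (h2 : i ≤ k - 1) :
    IsPath (knArc n) 1 n (P.eraseIdx i) := by
  have hi : i < P.length := by omega
  have hlen' : (P.eraseIdx i).length = k := by
    have := List.length_eraseIdx_add_one (l := P) hi; omega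
  refine ⟨by omega, ?_, ?_, List.Nodup.sublist (P.eraseIdx_sublist i) hP.2.2.2.1, ?_⟩
  · rw [head?_of_getElem (by omega : 0 < (P.eraseIdx i).length),
      List.getElem_eraseIdx_of_lt _ (by omega)]
    exact congrArg some (path_zero hP)
  · rw [getLast?_of_getElem (by omega : 0 < (P.eraseIdx i).length),
      List.getElem_eraseIdx_of_ge _ (by omega)]
    have hidx : (P.eraseIdx i).length - 1 + 1 = P.length - 1 := by omega
    simp only [hidx]
    exact congrArg some (path_last hP)
  · apply chain'_of_getElem
    intro j hj
    rcases lt_trichotomy (j + 1) i with hc | hc | hc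
    · rw [List.getElem_eraseIdx_of_lt _ (by omega),
        List.getElem_eraseIdx_of_lt _ (by omega)]
      exact path_arc hP (by omega)
    · -- j + 1 = i : new arc (P[j], P[i+1])
      rw [List.getElem_eraseIdx_of_lt _ (by omega),
        List.getElem_eraseIdx_of_ge _ (by omega)]
      have hj1 : j + 1 + 1 < P.length := by omega
      have hbj := path_bounds hP (i := j) (by omega)
      have hbj1 := path_bounds hP (i := j + 1 + 1) (by omega)
      have hne : P[j]'(by omega) ≠ P[j+1+1] := by
        intro h; have := path_getElem_inj hP (by omega) (by omega) h; omega
      have hne1 : P[j+1+1] ≠ 1 := path_ne_one hP (by omega) (by omega)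
      have hnen : P[j]'(by omega) ≠ n := path_ne_top hP (by omega)
      refine ⟨hbj.1, hbj.2, hbj1.1, hbj1.2, hne, hne1, hnen, ?_⟩
      rintro ⟨ha, hb⟩
      have hz : j = 0 := by
        have := path_getElem_inj hP (i := j) (j := 0) (by omega) (by omega)
          (by rw [ha, path_zero hP])
        omega
      have hl : j + 1 + 1 = P.length - 1 := by
        have := path_getElem_inj hP (i := j + 1 + 1) (j := P.length - 1) (by omega)
          (by omega) (by rw [hb, path_last hP])
        omega
      omega
    · rw [List.getElem_eraseIdx_of_ge _ (by omega),
        List.getElem_eraseIdx_of_ge _ (by omega)]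
      exact path_arc hP (by omega)

lemma finite_paths (m N : ℕ) : {l : List ℕ | l.length = m ∧ ∀ x ∈ l, x < N}.Finite := by
  induction m with
  | zero =>
    refine Set.Finite.subset (Set.finite_singleton []) ?_
    rintro l ⟨h, -⟩
    simp [List.length_eq_zero_iff.mp h]
  | succ m ih =>
    refine Set.Finite.subset (Set.Finite.image (fun p : ℕ × List ℕ => p.1 :: p.2)
      (Set.Finite.prod (Set.finite_Iio N) ih)) ?_
    rintro l ⟨hl, hx⟩
    cases l with
    | nil => simp at hl
    | cons a t =>
      refine ⟨(a, t), ⟨hx a (by simp), ?_, fun x hx' => hx x (by simp [hx'])⟩, rfl⟩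
      simpa using hl


open Finset in
lemma key_count {n k : ℕ} (hn : 5 ≤ n) (hk : 4 ≤ k) (hkn : k ≤ n - 1) (e : ℕ × ℕ)
    (F G : Finset (List ℕ))
    (hF : ∀ P, P ∈ F ↔ IsPath (knArc n) 1 n P ∧ P.length = k + 1 ∧ e ∈ arcsOf P)
    (hG : ∀ P, P ∈ G ↔ IsPath (knArc n) 1 n P ∧ P.length = k ∧ e ∈ arcsOf P) :
    (k - 3) * F.card ≤ (n - k) * ((k - 2) * G.card) := by
  classical
  set D : Finset ((_ : List ℕ) × ℕ) :=
    F.sigma (fun P => (Icc 1 (k-1)).filter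
      (fun i => P.getD i 0 ≠ e.1 ∧ P.getD i 0 ≠ e.2)) with hD
  set D' : Finset ((_ : List ℕ) × (ℕ × ℕ)) :=
    G.sigma (fun P' => ((Icc 2 (n-1)).filter (fun v => v ∉ P')) ×ˢ
      ((Icc 1 (k-1)).filter (fun i => ∀ j', j' + 1 < P'.length →
        P'.getD j' 0 = e.1 → P'.getD (j'+1) 0 = e.2 → i ≠ j' + 1))) with hD'
  -- lower bound on D.card
  have hlow : (k - 3) * F.card ≤ D.card := by
    rw [hD, Finset.card_sigma]
    calc (k - 3) * F.card = F.card * (k - 3) := by ring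
    _ ≤ _ := by
      apply Finset.card_nsmul_le_sum
      intro P hPF
      obtain ⟨hP, hPl, hPe⟩ := (hF P).mp hPF
      obtain ⟨j, hj, hj1, hj2⟩ := mem_arcsOf.mp hPe
      have hsub : (Icc 1 (k-1)).filter
          (fun i => ¬(P.getD i 0 ≠ e.1 ∧ P.getD i 0 ≠ e.2)) ⊆ {j, j+1} := by
        intro i hi
        simp only [Finset.mem_filter, Finset.mem_Icc, not_and_or, not_not] at hi
        obtain ⟨⟨hi1, hi2⟩, hor⟩ := hi
        have hilt : i < P.length := by omega
        rw [List.getD_eq_getElem _ _ hilt] at hor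
        simp only [Finset.mem_insert, Finset.mem_singleton]
        rcases hor with h | h
        · left; exact path_getElem_inj hP hilt (by omega) (h.trans hj1.symm)
        · right; exact path_getElem_inj hP hilt (by omega) (h.trans hj2.symm)
      have hneg : ((Icc 1 (k-1)).filter
          (fun i => ¬(P.getD i 0 ≠ e.1 ∧ P.getD i 0 ≠ e.2))).card ≤ 2 := by
        calc _ ≤ ({j, j+1} : Finset ℕ).card := Finset.card_le_card hsub
        _ ≤ 2 := Finset.card_insert_le _ _ |>.trans (by simp)
      have htot := Finset.card_filter_add_card_filter_not
        (s := Icc 1 (k-1)) (p := fun i => P.getD i 0 ≠ e.1 ∧ P.getD i 0 ≠ e.2)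
      beta_reduce at htot
      have hIcc : (Icc 1 (k-1)).card = k - 1 := by
        rw [Nat.card_Icc]; omega
      have : k - 3 ≤ ((Icc 1 (k-1)).filter
          (fun i => P.getD i 0 ≠ e.1 ∧ P.getD i 0 ≠ e.2)).card := by omega
      simpa using this
  -- upper bound on D'.card
  have hup : D'.card ≤ G.card * ((n - k) * (k - 2)) := by
    rw [hD', Finset.card_sigma]
    apply Finset.sum_le_card_nsmul
    intro P' hPG
    obtain ⟨hP, hPl, hPe⟩ := (hG P').mp hPG
    have hnd := hP.2.2.2.1
    rw [Finset.card_product]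
    have htf : P'.toFinset.card = k := by
      rw [List.toFinset_card_of_nodup hnd, hPl]
    have hlen2 : 2 ≤ P'.length := hP.1
    have h1mem : (1:ℕ) ∈ P'.toFinset := by
      rw [List.mem_toFinset, ← path_zero hP]
      exact List.getElem_mem _
    have hnmem : (n:ℕ) ∈ P'.toFinset := by
      rw [List.mem_toFinset, ← path_last hP]
      exact List.getElem_mem _
    have hcardA : ((Icc 2 (n-1)).filter (fun v => v ∉ P')).card ≤ n - k := by
      have hsub : ((P'.toFinset.erase 1).erase n) ⊆
          (Icc 2 (n-1)).filter (fun v => v ∈ P') := by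
        intro v hv
        rw [Finset.mem_erase, Finset.mem_erase] at hv
        obtain ⟨hvn, hv1, hvP⟩ := hv
        rw [List.mem_toFinset] at hvP
        rw [Finset.mem_filter, Finset.mem_Icc]
        obtain ⟨m, hm, hme⟩ := List.mem_iff_getElem.mp hvP
        have hm0 : 0 < m := by
          rcases Nat.eq_zero_or_pos m with h | h
          · exfalso; apply hv1; rw [← hme]
            subst h; exact path_zero hP
          · exact h
        have hmlast : m + 1 < P'.length := by
          rcases Nat.lt_or_ge (m+1) P'.length with h | h
          · exact h
          · exfalso; apply hvn; rw [← hme]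
            have : m = P'.length - 1 := by omega
            subst this; exact path_last hP
        have := path_internal hP hm0 hmlast
        refine ⟨⟨by omega, by omega⟩, hvP⟩
      have hne1 : (n:ℕ) ∈ P'.toFinset.erase 1 := by
        rw [Finset.mem_erase]; exact ⟨by omega, hnmem⟩
      have hce : ((P'.toFinset.erase 1).erase n).card = k - 2 := by
        rw [Finset.card_erase_of_mem hne1, Finset.card_erase_of_mem h1mem, htf]
        omega
      have hkm2 : k - 2 ≤ ((Icc 2 (n-1)).filter (fun v => v ∈ P')).card := by
        rw [← hce]; exact Finset.card_le_card hsub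
      have htot := Finset.card_filter_add_card_filter_not
        (s := Icc 2 (n-1)) (p := fun v => v ∈ P')
      beta_reduce at htot
      have hIcc : (Icc 2 (n-1)).card = n - 2 := by rw [Nat.card_Icc]; omega
      omega
    have hcardB : ((Icc 1 (k-1)).filter (fun i => ∀ j', j' + 1 < P'.length →
        P'.getD j' 0 = e.1 → P'.getD (j'+1) 0 = e.2 → i ≠ j' + 1)).card ≤ k - 2 := by
      obtain ⟨j₀, hj₀, hj₀1, hj₀2⟩ := mem_arcsOf.mp hPe
      have hsub : ((Icc 1 (k-1)).filter (fun i => ∀ j', j' + 1 < P'.length →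
          P'.getD j' 0 = e.1 → P'.getD (j'+1) 0 = e.2 → i ≠ j' + 1)) ⊆
          (Icc 1 (k-1)).erase (j₀ + 1) := by
        intro i hi
        rw [Finset.mem_filter] at hi
        rw [Finset.mem_erase]
        refine ⟨hi.2 j₀ hj₀ ?_ ?_, hi.1⟩
        · rw [List.getD_eq_getElem _ _ (by omega)]; exact hj₀1
        · rw [List.getD_eq_getElem _ _ (by omega)]; exact hj₀2
      calc _ ≤ ((Icc 1 (k-1)).erase (j₀ + 1)).card := Finset.card_le_card hsub
      _ = k - 2 := by
        rw [Finset.card_erase_of_mem, Nat.card_Icc]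
        · omega
        · rw [Finset.mem_Icc]; omega
    calc _ ≤ (n - k) * (k - 2) := Nat.mul_le_mul hcardA hcardB
    _ ≤ _ := le_refl _
  -- the injection
  have hinj := Finset.card_le_card_of_injOn
    (fun x : (_ : List ℕ) × ℕ => (⟨x.1.eraseIdx x.2, (x.1.getD x.2 0, x.2)⟩ :
      (_ : List ℕ) × (ℕ × ℕ))) (s := D) (t := D') ?_ ?_
  · calc (k - 3) * F.card ≤ D.card := hlow
    _ ≤ D'.card := hinj
    _ ≤ G.card * ((n - k) * (k - 2)) := hup
    _ = (n - k) * ((k - 2) * G.card) := by ring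
  · -- maps to
    rintro ⟨P, i⟩ hx
    rw [Finset.mem_coe, hD, Finset.mem_sigma] at hx
    dsimp only at hx
    obtain ⟨hPF, hifil⟩ := hx
    rw [Finset.mem_filter, Finset.mem_Icc] at hifil
    obtain ⟨⟨hi1, hi2⟩, hc1, hc2⟩ := hifil
    obtain ⟨hP, hPl, hPe⟩ := (hF P).mp hPF
    have hnd := hP.2.2.2.1
    have hilt : i < P.length := by omega
    rw [List.getD_eq_getElem _ _ hilt] at hc1 hc2
    obtain ⟨j, hj, hj1, hj2⟩ := mem_arcsOf.mp hPe
    have hij : i ≠ j := by intro h; subst h; exact hc1 hj1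
    have hij' : i ≠ j + 1 := by intro h; subst h; exact hc2 hj2
    have hlenE : (P.eraseIdx i).length = k := by
      have := List.length_eraseIdx_add_one (l := P) hilt; omega
    rw [Finset.mem_coe, hD', Finset.mem_sigma]
    constructor
    · rw [hG]
      exact ⟨isPath_eraseIdx hk hP hPl hi1 hi2, hlenE,
        arcs_mem_erase hj hj1 hj2 hij hij' hilt⟩
    · rw [Finset.mem_product]
      constructor
      · simp only [List.getD_eq_getElem _ _ hilt]
        rw [Finset.mem_filter, Finset.mem_Icc]
        have := path_internal hP (by omega : 0 < i) (by omega : i + 1 < P.length)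
        exact ⟨⟨by omega, by omega⟩, not_mem_erase_self hnd hilt⟩
      · rw [Finset.mem_filter, Finset.mem_Icc]
        refine ⟨⟨hi1, hi2⟩, ?_⟩
        intro j' hj'l g1 g2
        rw [List.getD_eq_getElem _ _ (by omega)] at g1 g2
        exact erase_arc_pos hP hj hj1 hj2 hij hij' hilt hj'l g1 g2
  · -- injectivity
    rintro ⟨P, i⟩ hx ⟨P2, i2⟩ hy hxy
    rw [Finset.mem_coe, hD, Finset.mem_sigma] at hx hy
    dsimp only at hx hy
    obtain ⟨hPF, hifil⟩ := hx
    obtain ⟨hPF2, hifil2⟩ := hy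
    rw [Finset.mem_filter, Finset.mem_Icc] at hifil hifil2
    obtain ⟨hP, hPl, -⟩ := (hF P).mp hPF
    obtain ⟨hP2, hPl2, -⟩ := (hF P2).mp hPF2
    have hilt : i < P.length := by omega
    have hilt2 : i2 < P2.length := by omega
    have h1 : P.eraseIdx i = P2.eraseIdx i2 :=
      congrArg (fun x : (_ : List ℕ) × (ℕ × ℕ) => x.1) hxy
    have h2 : (P.getD i 0, i) = (P2.getD i2 0, i2) :=
      congrArg (fun x : (_ : List ℕ) × (ℕ × ℕ) => x.2) hxy
    have hii : i = i2 := congrArg Prod.snd h2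
    have hv : P.getD i 0 = P2.getD i2 0 := congrArg Prod.fst h2
    have hPP : P = P2 := by
      have e1 := insertIdx_getElem_eraseIdx P i hilt
      have e2 := insertIdx_getElem_eraseIdx P2 i2 hilt2
      rw [← List.getD_eq_getElem _ 0 hilt] at e1
      rw [← List.getD_eq_getElem _ 0 hilt2] at e2
      rw [← e1, ← e2, h1, hv, hii]
    subst hPP
    subst hii
    rfl

lemma arcsOf_nodup {V : Type*} {P : List V} (h : P.Nodup) : (arcsOf P).Nodup := by
  have hm : (arcsOf P).map Prod.snd = P.tail :=
    List.map_snd_zip (by simp [List.length_tail])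
  have ht : P.tail.Nodup := List.Nodup.sublist (List.tail_sublist P) h
  rw [← hm] at ht
  exact List.Nodup.of_map _ ht

end Stmt11

/-- On `K_n^*` (`n ≥ 5`): if the instance is linearizable then
`CP_k ≤ (n-k)·((k-2)/(k-3))·CP_{k-1}` for every `k = 4,…,n-1`. -/
theorem stmt_11 (n : ℕ) (hn : 5 ≤ n) (Q : ℕ × ℕ → ℕ × ℕ → ℝ)
    (hQ0 : ∀ e f, 0 ≤ Q e f) (hQs : ∀ e f, Q e f = Q f e) (hQd : ∀ e, Q e e = 0)
    (hQpath : ∀ e f,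
      (¬ ∃ P, IsPath (knArc n) 1 n P ∧ e ∈ arcsOf P ∧ f ∈ arcsOf P) → Q e f = 0)
    (hlin : Linearizable (knArc n) 1 n (fun _ => 0) Q) :
    ∀ k, 4 ≤ k → k ≤ n - 1 →
      CPsum n Q k ≤
        ((n : ℝ) - k) * (((k : ℝ) - 2) / ((k : ℝ) - 3)) * CPsum n Q (k - 1) := by
  classical
  obtain ⟨c', hc'0, hc'⟩ := hlin
  intro k hk4 hkn
  have hfin : ∀ m : ℕ, {P : List ℕ | IsPath (knArc n) 1 n P ∧ P.length = m + 1}.Finite := by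
    intro m
    apply (Stmt11.finite_paths (m+1) (n+1)).subset
    rintro P ⟨hP, hPl⟩
    refine ⟨hPl, fun x hx => ?_⟩
    obtain ⟨i, hi, rfl⟩ := List.mem_iff_getElem.mp hx
    have := Stmt11.path_bounds hP hi
    omega
  set Fk := (hfin k).toFinset with hFk
  set Fk1 := (hfin (k-1)).toFinset with hFk1
  have hmemFk : ∀ P, P ∈ Fk ↔ IsPath (knArc n) 1 n P ∧ P.length = k + 1 := fun P => by
    rw [hFk, Set.Finite.mem_toFinset]; rfl
  have hmemFk1 : ∀ P, P ∈ Fk1 ↔ IsPath (knArc n) 1 n P ∧ P.length = k := fun P => by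
    rw [hFk1, Set.Finite.mem_toFinset]
    constructor
    · rintro ⟨h1, h2⟩; exact ⟨h1, by omega⟩
    · rintro ⟨h1, h2⟩; exact ⟨h1, by omega⟩
  have hCPk : CPsum n Q k = ∑ P ∈ Fk, cost (fun _ => 0) Q P :=
    finsum_mem_eq_finite_toFinset_sum _ (hfin k)
  have hCPk1 : CPsum n Q (k-1) = ∑ P ∈ Fk1, cost (fun _ => 0) Q P :=
    finsum_mem_eq_finite_toFinset_sum _ (hfin (k-1))
  set E : Finset (ℕ × ℕ) := Finset.Icc 1 n ×ˢ Finset.Icc 1 n with hE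
  have hlin' : ∀ {P : List ℕ}, IsPath (knArc n) 1 n P →
      cost (fun _ => 0) Q P = ∑ e ∈ E, if e ∈ arcsOf P then c' e else 0 := by
    intro P hP
    rw [hc' P hP]
    have hsubE : (arcsOf P).toFinset ⊆ E := by
      intro e he
      rw [List.mem_toFinset] at he
      obtain ⟨j, hj, hj1, hj2⟩ := Stmt11.mem_arcsOf.mp he
      have h1 := Stmt11.path_bounds hP (i := j) (by omega)
      have h2 := Stmt11.path_bounds hP (i := j+1) (by omega)
      rw [hE, Finset.mem_product, Finset.mem_Icc, Finset.mem_Icc, ← hj1, ← hj2]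
      exact ⟨⟨h1.1, h1.2⟩, ⟨h2.1, h2.2⟩⟩
    have : linCost c' P = ∑ e ∈ (arcsOf P).toFinset, c' e :=
      (List.sum_toFinset _ (Stmt11.arcsOf_nodup hP.2.2.2.1)).symm
    rw [this]
    have hiff : ∀ e, e ∈ arcsOf P ↔ e ∈ (arcsOf P).toFinset := fun e =>
      (List.mem_toFinset).symm
    calc ∑ e ∈ (arcsOf P).toFinset, c' e
        = ∑ e ∈ E ∩ (arcsOf P).toFinset, c' e := by
          rw [Finset.inter_eq_right.mpr hsubE]
    _ = ∑ e ∈ E, if e ∈ (arcsOf P).toFinset then c' e else 0 := by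
          rw [Finset.sum_ite_mem]
    _ = ∑ e ∈ E, if e ∈ arcsOf P then c' e else 0 := by
          refine Finset.sum_congr rfl (fun e _ => ?_)
          simp [List.mem_toFinset]
  have hsum : ∀ (Fm : Finset (List ℕ)), (∀ P ∈ Fm, IsPath (knArc n) 1 n P) →
      ∑ P ∈ Fm, cost (fun _ => 0) Q P
        = ∑ e ∈ E, ((Fm.filter (fun P => e ∈ arcsOf P)).card : ℝ) * c' e := by
    intro Fm hFm
    rw [Finset.sum_congr rfl (fun P hP => hlin' (hFm P hP)), Finset.sum_comm]
    refine Finset.sum_congr rfl (fun e he => ?_)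
    rw [← Finset.sum_filter, Finset.sum_const, nsmul_eq_mul]
  have key : ∀ e ∈ E, ((Fk.filter (fun P => e ∈ arcsOf P)).card : ℝ) * c' e ≤
      ((n : ℝ) - k) * (((k : ℝ) - 2) / ((k : ℝ) - 3)) *
        (((Fk1.filter (fun P => e ∈ arcsOf P)).card : ℝ) * c' e) := by
    intro e he
    have hnat := Stmt11.key_count hn hk4 hkn e
      (Fk.filter (fun P => e ∈ arcsOf P)) (Fk1.filter (fun P => e ∈ arcsOf P))
      (fun P => by rw [Finset.mem_filter, hmemFk P]; tauto)
      (fun P => by rw [Finset.mem_filter, hmemFk1 P]; tauto)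
    set A := (Fk.filter (fun P => e ∈ arcsOf P)).card with hA
    set B := (Fk1.filter (fun P => e ∈ arcsOf P)).card with hB
    have h := (Nat.cast_le (α := ℝ)).mpr hnat
    push_cast [Nat.cast_sub (by omega : 3 ≤ k), Nat.cast_sub (by omega : k ≤ n),
      Nat.cast_sub (by omega : 2 ≤ k)] at h
    have h3 : (0:ℝ) < (k : ℝ) - 3 := by
      have : (4:ℝ) ≤ (k:ℝ) := by exact_mod_cast hk4
      linarith
    have hAB : (A : ℝ) ≤ ((n : ℝ) - k) * (((k : ℝ) - 2) / ((k : ℝ) - 3)) * B := by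
      have heq : ((n : ℝ) - k) * (((k : ℝ) - 2) / ((k : ℝ) - 3)) * (B : ℝ)
          = (((n : ℝ) - k) * (((k : ℝ) - 2) * B)) / ((k : ℝ) - 3) := by
        ring
      rw [heq, le_div_iff₀ h3]
      calc (A : ℝ) * ((k:ℝ) - 3) = ((k:ℝ) - 3) * A := by ring
      _ ≤ _ := h
    calc (A : ℝ) * c' e ≤ (((n : ℝ) - k) * (((k : ℝ) - 2) / ((k : ℝ) - 3)) * B) * c' e :=
          mul_le_mul_of_nonneg_right hAB (hc'0 e)
    _ = ((n : ℝ) - k) * (((k : ℝ) - 2) / ((k : ℝ) - 3)) * ((B : ℝ) * c' e) := by ring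
  rw [hCPk, hCPk1, hsum Fk (fun P hP => ((hmemFk P).mp hP).1),
    hsum Fk1 (fun P hP => ((hmemFk1 P).mp hP).1), Finset.mul_sum]
  exact Finset.sum_le_sum key
end

section
/- Let I = (K_4^*, s, t, c, Q) be a QSPP instance with s = v_1, t = v_4, c = 0, and q_{ef} = 0 for every pair of arcs not contained together in any s-t path. Let P_1 = (v_1,v_2,v_4), P_2 = (v_1,v_3,v_4), P_3 = (v_1,v_2,v_3,v_4), P_4 = (v_1,v_3,v_2,v_4) be the four s-t paths. Then I is linearizable if and only if C(P_1,c,Q) + C(P_2,c,Q) ≤ C(P_3,c,Q) + C(P_4,c,Q). -/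
lemma mem_bound_aux : ∀ (l : List ℕ) (a : ℕ), (a::l).Chain' (knArc 4) →
    ∀ x ∈ l, 1 ≤ x ∧ x ≤ 4 := by
  intro l
  induction l with
  | nil => simp
  | cons b l ih =>
    intro a hc x hx
    rw [List.Chain', List.isChain_cons_cons] at hc
    rcases List.mem_cons.1 hx with rfl | hx
    · exact ⟨hc.1.2.2.1, hc.1.2.2.2.1⟩
    · exact ih b hc.2 x hx

lemma path_classify (P : List ℕ) (h : IsPath (knArc 4) 1 4 P) :
    P = [1,2,4] ∨ P = [1,3,4] ∨ P = [1,2,3,4] ∨ P = [1,3,2,4] := by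
  obtain ⟨hlen, hhead, hlast, hnodup, hchain⟩ := h
  have hlen4 : P.length ≤ 4 := by
    rcases P with _ | ⟨a, l⟩
    · simp at hlen
    · have ha : a = 1 := by simpa using hhead
      have hmem : ∀ x ∈ a :: l, x ∈ Finset.Icc 1 4 := by
        intro x hx
        rcases List.mem_cons.1 hx with h | hx
        · simp [h, ha]
        · have := mem_bound_aux l a hchain x hx
          simp [Finset.mem_Icc]; omega
      have hcard : (a :: l).toFinset.card = (a :: l).length :=
        List.toFinset_card_of_nodup hnodup
      have hsub : (a :: l).toFinset ⊆ Finset.Icc 1 4 := by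
        intro x hx; exact hmem x (List.mem_toFinset.1 hx)
      have h1 := Finset.card_le_card hsub
      rw [hcard] at h1
      simpa [Nat.card_Icc] using h1
  rcases P with _|⟨a,_|⟨b,_|⟨c,_|⟨d,_|⟨e,l⟩⟩⟩⟩⟩
  · simp at hlen
  · simp at hlen
  · have ha : a = 1 := by simpa using hhead
    have hb : b = 4 := by simpa using hlast
    rw [List.Chain', List.isChain_cons_cons] at hchain
    exfalso
    subst ha hb
    exact hchain.1.2.2.2.2.2.2.2 ⟨rfl, rfl⟩
  · have ha : a = 1 := by simpa using hhead
    have hc : c = 4 := by simpa using hlast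
    subst ha hc
    simp only [List.Chain', List.isChain_cons_cons, List.isChain_singleton, knArc] at hchain
    have : b = 2 ∨ b = 3 := by omega
    rcases this with rfl | rfl
    · left; rfl
    · right; left; rfl
  · have ha : a = 1 := by simpa using hhead
    have hd : d = 4 := by simpa using hlast
    subst ha hd
    simp only [List.Chain', List.isChain_cons_cons, List.isChain_singleton, knArc] at hchain
    have : b = 2 ∧ c = 3 ∨ b = 3 ∧ c = 2 := by omega
    rcases this with ⟨rfl, rfl⟩ | ⟨rfl, rfl⟩
    · right; right; left; rfl
    · right; right; right; rfl
  · simp at hlen4; omega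

lemma cost_nonneg_aux {V : Type*} (Q : V × V → V × V → ℝ) (hQ0 : ∀ e f, 0 ≤ Q e f)
    (P : List V) : 0 ≤ cost (fun _ => 0) Q P := by
  have h1 : linCost (fun _ => (0:ℝ)) P = 0 := by simp [linCost]
  rw [cost, h1, add_zero]
  apply List.sum_nonneg
  intro x hx
  simp only [List.mem_map] at hx
  obtain ⟨e, _, rfl⟩ := hx
  apply List.sum_nonneg
  intro y hy
  simp only [List.mem_map] at hy
  obtain ⟨f, _, rfl⟩ := hy
  exact hQ0 e f

lemma solve_system_aux (A B C D : ℝ) (hA : 0 ≤ A) (hB : 0 ≤ B) (hC : 0 ≤ C) (hD : 0 ≤ D)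
    (h : A + B ≤ C + D) :
    ∃ xa xb xc xc2 xd xe : ℝ, 0 ≤ xa ∧ 0 ≤ xb ∧ 0 ≤ xc ∧ 0 ≤ xc2 ∧ 0 ≤ xd ∧ 0 ≤ xe ∧
      xa + xd = A ∧ xb + xe = B ∧ xa + xc + xe = C ∧ xb + xc2 + xd = D := by
  set δ := max (A - C) (-B) with hδ
  set xd := max δ 0 with hxd
  refine ⟨A - xd, B - (xd - δ), C - A + δ, D - B - δ, xd, xd - δ, ?_, ?_, ?_, ?_, ?_, ?_,
    by ring, by ring, by ring, by ring⟩
  · have h1 : δ ≤ A := max_le (by linarith) (by linarith)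
    have : xd ≤ A := max_le h1 hA
    linarith
  · have hxe : xd - δ = max 0 (-δ) := by
      rw [hxd, ← max_sub_sub_right]; ring_nf
    have h2 : -δ ≤ B := by
      have := le_max_right (A - C) (-B); linarith
    rw [hxe]
    have : max 0 (-δ) ≤ B := max_le hB h2
    linarith
  · have := le_max_left (A - C) (-B); linarith
  · have hd3 : δ ≤ D - B := max_le (by linarith) (by linarith)
    linarith
  · exact le_max_right _ _
  · have := le_max_left δ 0; linarith

/-- On `K_4^*` (vertices `1,2,3,4`, `s = 1`, `t = 4`), the instance is linearizable iff
`C(P₁) + C(P₂) ≤ C(P₃) + C(P₄)`, where `P₁,P₂` are the two paths of length two and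
`P₃,P₄` the two paths of length three. -/
theorem stmt_12 (Q : ℕ × ℕ → ℕ × ℕ → ℝ)
    (hQ0 : ∀ e f, 0 ≤ Q e f) (hQs : ∀ e f, Q e f = Q f e) (hQd : ∀ e, Q e e = 0)
    (hQpath : ∀ e f,
      (¬ ∃ P, IsPath (knArc 4) 1 4 P ∧ e ∈ arcsOf P ∧ f ∈ arcsOf P) → Q e f = 0) :
    Linearizable (knArc 4) 1 4 (fun _ => 0) Q ↔
      cost (fun _ => 0) Q [1, 2, 4] + cost (fun _ => 0) Q [1, 3, 4] ≤
      cost (fun _ => 0) Q [1, 2, 3, 4] + cost (fun _ => 0) Q [1, 3, 2, 4] := by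
  have p1 : IsPath (knArc 4) 1 4 [1,2,4] := by
    refine ⟨by simp, by simp, by simp, by simp, ?_⟩
    simp [List.Chain', List.isChain_cons_cons, knArc]
  have p2 : IsPath (knArc 4) 1 4 [1,3,4] := by
    refine ⟨by simp, by simp, by simp, by simp, ?_⟩
    simp [List.Chain', List.isChain_cons_cons, knArc]
  have p3 : IsPath (knArc 4) 1 4 [1,2,3,4] := by
    refine ⟨by simp, by simp, by simp, by simp, ?_⟩
    simp [List.Chain', List.isChain_cons_cons, knArc]
  have p4 : IsPath (knArc 4) 1 4 [1,3,2,4] := by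
    refine ⟨by simp, by simp, by simp, by simp, ?_⟩
    simp [List.Chain', List.isChain_cons_cons, knArc]
  constructor
  · rintro ⟨c', hpos, hc⟩
    have h1 := hc _ p1
    have h2 := hc _ p2
    have h3 := hc _ p3
    have h4 := hc _ p4
    simp only [linCost, arcsOf] at h1 h2 h3 h4
    simp at h1 h2 h3 h4
    linarith [hpos (2,3), hpos (3,2)]
  · intro hineq
    obtain ⟨xa, xb, xc, xc2, xd, xe, h1, h2, h3, h4, h5, h6, e1, e2, e3, e4⟩ :=
      solve_system_aux _ _ _ _ (cost_nonneg_aux Q hQ0 [1,2,4]) (cost_nonneg_aux Q hQ0 [1,3,4])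
        (cost_nonneg_aux Q hQ0 [1,2,3,4]) (cost_nonneg_aux Q hQ0 [1,3,2,4]) hineq
    refine ⟨fun p => if p = (1,2) then xa else if p = (1,3) then xb else
      if p = (2,3) then xc else if p = (3,2) then xc2 else
      if p = (2,4) then xd else if p = (3,4) then xe else 0, ?_, ?_⟩
    · intro e
      dsimp only
      split_ifs <;> first | assumption | exact le_refl 0
    · intro P hP
      rcases path_classify P hP with rfl | rfl | rfl | rfl <;>
        simp [linCost, arcsOf, Prod.ext_iff] <;> linarith
end

section
/- Let T_4 be a tournament on four vertices, i.e., a digraph in which every pair of distinct vertices is connected by exactly one directed arc, and let I = (T_4, s, t, c, Q) be any QSPP instance on T_4 with nonnegative linear costs c and nonnegative symmetric interaction cost matrix Q with zero diagonal. Then I is linearizable. -/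
lemma cost_nonneg {V : Type*} (c : V × V → ℝ) (Q : V × V → V × V → ℝ)
    (hc : ∀ e, 0 ≤ c e) (hQ0 : ∀ e f, 0 ≤ Q e f) (L : List V) :
    0 ≤ cost c Q L := by
  unfold cost linCost
  apply add_nonneg
  · apply List.sum_nonneg
    intro x hx
    obtain ⟨e, _, rfl⟩ := List.mem_map.mp hx
    apply List.sum_nonneg
    intro y hy
    obtain ⟨f, _, rfl⟩ := List.mem_map.mp hy
    exact hQ0 e f
  · apply List.sum_nonneg
    intro x hx
    obtain ⟨e, _, rfl⟩ := List.mem_map.mp hx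
    exact hc e

lemma mem_of_four {V : Type*} [Fintype V] (hcard : Fintype.card V = 4)
    (a b c d : V) (hab : a ≠ b) (hac : a ≠ c) (had : a ≠ d) (hbc : b ≠ c)
    (hbd : b ≠ d) (hcd : c ≠ d) (w : V) : w = a ∨ w = b ∨ w = c ∨ w = d := by
  classical
  have hu : ({a, b, c, d} : Finset V) = Finset.univ := by
    apply Finset.eq_univ_of_card
    rw [hcard]
    rw [Finset.card_insert_of_notMem (by simp [hab, hac, had]),
        Finset.card_insert_of_notMem (by simp [hbc, hbd]),
        Finset.card_insert_of_notMem (by simp [hcd]),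
        Finset.card_singleton]
  have : w ∈ ({a, b, c, d} : Finset V) := hu ▸ Finset.mem_univ w
  simpa using this

/-- Every QSPP instance on a tournament with four vertices is linearizable. -/
theorem stmt_13 {V : Type*} [Fintype V] (hcard : Fintype.card V = 4)
    (A : V → V → Prop) (hirr : ∀ v, ¬ A v v)
    (htour : ∀ u v : V, u ≠ v → Xor' (A u v) (A v u))
    (s t : V) (c : V × V → ℝ) (Q : V × V → V × V → ℝ)
    (hc : ∀ e, 0 ≤ c e) (hQ0 : ∀ e f, 0 ≤ Q e f)
    (hQs : ∀ e f, Q e f = Q f e) (hQd : ∀ e, Q e e = 0) :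
    Linearizable A s t c Q := by
  classical
  -- "mid-sink" predicate: v is a middle vertex receiving an arc from the other middle vertex
  set Pr : V → Prop := fun v => ∃ w, w ≠ s ∧ w ≠ t ∧ w ≠ v ∧ A w v with hPr
  set f : V × V → ℝ := fun e =>
    if e.1 = s ∧ e.2 = t then cost c Q [s, t]
    else if e.1 = s ∧ e.2 ≠ t ∧ Pr e.2 then cost c Q [s, e.2, t]
    else if e.2 = t ∧ e.1 ≠ s ∧ e.1 ≠ t ∧ ¬ Pr e.1 then cost c Q [s, e.1, t]
    else if e.1 ≠ s ∧ e.1 ≠ t ∧ e.2 ≠ s ∧ e.2 ≠ t then cost c Q [s, e.1, e.2, t]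
    else 0 with hf
  refine ⟨f, ?_, ?_⟩
  · intro e
    rw [hf]
    dsimp only
    split_ifs <;> first
      | exact cost_nonneg c Q hc hQ0 _
      | exact le_refl 0
  · rintro L ⟨hlen, hhead, hlast, hnd, hch⟩
    have hlen4 : L.length ≤ 4 := hcard ▸ List.Nodup.length_le_card hnd
    match L, hlen, hlen4 with
    | [a, b], _, _ =>
      have has : a = s := by simpa using hhead
      have hbt : b = t := by simpa using hlast
      subst has hbt
      have hst : a ≠ b := by simpa using hnd
      have e1 : f (a, b) = cost c Q [a, b] := by
        rw [hf]; simp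
      simp only [linCost, arcsOf]
      simpa [linCost, arcsOf] using e1.symm
    | [a, x, b], _, _ =>
      have has : a = s := by simpa using hhead
      have hbt : b = t := by simpa using hlast
      subst has hbt
      have hnd' : (a ≠ x ∧ a ≠ b) ∧ x ≠ b := by simpa using hnd
      obtain ⟨⟨hax, hab⟩, hxb⟩ := hnd'
      have e1 : f (a, x) = if Pr x then cost c Q [a, x, b] else 0 := by
        rw [hf]; by_cases h : Pr x <;>
          simp [hax.symm, hxb, h]
      have e2 : f (x, b) = if Pr x then 0 else cost c Q [a, x, b] := by
        rw [hf]; by_cases h : Pr x <;>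
          simp [hax.symm, hxb, h]
      have : linCost f [a, x, b] = f (a, x) + f (x, b) := by
        simp [linCost, arcsOf]
      rw [this, e1, e2]
      by_cases h : Pr x <;> simp [h]
    | [a, x, y, b], _, _ =>
      have has : a = s := by simpa using hhead
      have hbt : b = t := by simpa using hlast
      subst has hbt
      have hnd' : (a ≠ x ∧ a ≠ y ∧ a ≠ b) ∧ (x ≠ y ∧ x ≠ b) ∧ y ≠ b := by
        simpa using hnd
      obtain ⟨⟨hax, hay, hab⟩, ⟨hxy, hxb⟩, hyb⟩ := hnd'
      have hch' : A a x ∧ A x y ∧ A y b := by simpa [List.Chain'] using hch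
      obtain ⟨hAax, hAxy, hAyb⟩ := hch'
      have hPry : Pr y := ⟨x, Ne.symm hax, hxb, hxy, hAxy⟩
      have hnPrx : ¬ Pr x := by
        rintro ⟨w, hws, hwt, hwx, hAwx⟩
        have := mem_of_four hcard a x y b hax hay hab hxy hxb hyb w
        rcases this with rfl | rfl | rfl | rfl
        · exact hws rfl
        · exact hwx rfl
        · rcases htour x w hxy with ⟨_, h2⟩ | ⟨_, h2⟩
          · exact h2 hAwx
          · exact h2 hAxy
        · exact hwt rfl
      have e1 : f (a, x) = 0 := by
        rw [hf]; simp [hax.symm, hxb, hnPrx, hax]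
      have e2 : f (x, y) = cost c Q [a, x, y, b] := by
        rw [hf]; simp [Ne.symm hax, hxb, Ne.symm hay, hyb]
      have e3 : f (y, b) = 0 := by
        rw [hf]; simp [Ne.symm hay, hyb, hPry]
      have : linCost f [a, x, y, b] = f (a, x) + f (x, y) + f (y, b) := by
        simp [linCost, arcsOf]; ring
      rw [this, e1, e2, e3]
      ring
    | a :: x :: y :: z :: w :: rest, _, h4 =>
      simp only [List.length_cons] at h4
      omega
end

section
/- Let p, q ≥ 2 and let J = {(v_{i,j}, v_{i+1,j}) : 1 ≤ i ≤ p−1, 1 ≤ j ≤ q−1} ∪ {(v_{1,1}, v_{1,2})} be a subset of the arcs of the directed grid graph G_{p,q}, with s = v_{1,1}, t = v_{p,q}. If c and d are two (real-valued) linear cost vectors on the arcs of G_{p,q} that both vanish on every arc outside J, and C(P,c) = C(P,d) for every s-t path P, then c = d. -/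
/-- The arc relation of the directed grid graph `G_{p,q}` (vertices indexed from `0`,
so vertex `(i,j)` with `i < p`, `j < q` corresponds to `v_{i+1,j+1}`). -/
def gridArc (p q : ℕ) : ℕ × ℕ → ℕ × ℕ → Prop := fun a b =>
  a.1 < p ∧ a.2 < q ∧
    ((b = (a.1 + 1, a.2) ∧ a.1 + 1 < p) ∨ (b = (a.1, a.2 + 1) ∧ a.2 + 1 < q))

/-- The arc set `J` of the directed grid graph `G_{p,q}` (0-based indexing): the vertical
arcs `((i,j),(i+1,j))` with `i+1 ≤ p-1`, `j+1 ≤ q-1`, together with the arc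
`((0,0),(0,1))`. -/
def gridJ (p q : ℕ) : Set ((ℕ × ℕ) × (ℕ × ℕ)) :=
  {e | (∃ i j, i + 1 < p ∧ j + 1 < q ∧ e = ((i, j), (i + 1, j))) ∨
    e = ((0, 0), (0, 1))}

namespace Stmt17Aux

def step (v : ℕ × ℕ) (b : Bool) : ℕ × ℕ :=
  if b then (v.1 + 1, v.2) else (v.1, v.2 + 1)

def route (v : ℕ × ℕ) : List Bool → List (ℕ × ℕ)
  | [] => [v]
  | b :: ms => v :: route (step v b) ms

noncomputable def pathSum (f : (ℕ × ℕ) × (ℕ × ℕ) → ℝ) : ℕ × ℕ → List Bool → ℝ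
  | _, [] => 0
  | v, b :: ms => f (v, step v b) + pathSum f (step v b) ms

lemma route_cons (v : ℕ × ℕ) (ms : List Bool) :
    route v ms = v :: (route v ms).tail := by cases ms <;> rfl

lemma route_head (v : ℕ × ℕ) (ms : List Bool) : (route v ms).head? = some v := by
  cases ms <;> rfl

lemma route_length (ms : List Bool) : ∀ v, (route v ms).length = ms.length + 1 := by
  induction ms with
  | nil => intro v; rfl
  | cons b ms ih => intro v; simp [route, ih]

lemma route_getLast (ms : List Bool) : ∀ v : ℕ × ℕ, (route v ms).getLast? =
    some (v.1 + ms.count true, v.2 + ms.count false) := by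
  induction ms with
  | nil => intro v; simp [route]
  | cons b ms ih =>
    intro v
    rw [route, route_cons (step v b) ms, List.getLast?_cons_cons, ← route_cons, ih]
    cases b <;> simp [step, List.count_cons, Prod.ext_iff] <;> omega

lemma route_chain_lt (ms : List Bool) :
    ∀ v, (route v ms).Chain' (fun a b : ℕ × ℕ => a.1 + a.2 < b.1 + b.2) := by
  induction ms with
  | nil => intro v; exact List.isChain_singleton _
  | cons b ms ih =>
    intro v
    rw [route, route_cons (step v b) ms]
    refine List.IsChain.cons_cons ?_ ?_
    · cases b <;> simp [step]
    · rw [← route_cons]; exact ih _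

lemma route_nodup (v : ℕ × ℕ) (ms : List Bool) : (route v ms).Nodup := by
  haveI : IsTrans (ℕ × ℕ) (fun a b : ℕ × ℕ => a.1 + a.2 < b.1 + b.2) :=
    ⟨fun a b c h1 h2 => h1.trans h2⟩
  have hp := (List.isChain_iff_pairwise).1 (route_chain_lt ms v)
  exact hp.imp fun {a b} hab => by intro he; rw [he] at hab; omega

lemma route_chain_arc (p q : ℕ) (ms : List Bool) : ∀ v : ℕ × ℕ,
    v.1 + ms.count true < p → v.2 + ms.count false < q →
    (route v ms).Chain' (gridArc p q) := by
  induction ms with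
  | nil => intro v _ _; exact List.isChain_singleton _
  | cons b ms ih =>
    intro v h1 h2
    rw [route, route_cons (step v b) ms]
    cases b <;> simp [List.count_cons] at h1 h2 <;>
      refine List.IsChain.cons_cons ?_ ?_
    · simp [gridArc, step, Prod.ext_iff]; omega
    · rw [← route_cons]; exact ih _ (by simpa [step] using by omega) (by simpa [step] using by omega)
    · simp [gridArc, step, Prod.ext_iff]; omega
    · rw [← route_cons]; exact ih _ (by simpa [step] using by omega) (by simpa [step] using by omega)

lemma linCost_cons_cons (f : (ℕ × ℕ) × (ℕ × ℕ) → ℝ) (a b : ℕ × ℕ) (l : List (ℕ × ℕ)) :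
    linCost f (a :: b :: l) = f (a, b) + linCost f (b :: l) := by
  simp [linCost, arcsOf]

lemma linCost_route (f : (ℕ × ℕ) × (ℕ × ℕ) → ℝ) (ms : List Bool) :
    ∀ v, linCost f (route v ms) = pathSum f v ms := by
  induction ms with
  | nil => intro v; simp [route, linCost, arcsOf, pathSum]
  | cons b ms ih =>
    intro v
    rw [route, route_cons (step v b) ms, linCost_cons_cons, ← route_cons, ih, pathSum]

lemma pathSum_true (f : (ℕ × ℕ) × (ℕ × ℕ) → ℝ) :
    ∀ (k : ℕ) (v : ℕ × ℕ) (ms : List Bool),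
    pathSum f v (List.replicate k true ++ ms) =
      (∑ r ∈ Finset.range k, f ((v.1 + r, v.2), (v.1 + r + 1, v.2)))
        + pathSum f (v.1 + k, v.2) ms := by
  intro k
  induction k with
  | zero => intro v ms; simp
  | succ k ih =>
    intro v ms
    rw [List.replicate_succ, List.cons_append, pathSum, ih]
    rw [Finset.sum_range_succ']
    have h1 : ∀ r : ℕ, v.1 + (r + 1) = v.1 + 1 + r := fun r => by omega
    have h2 : v.1 + (k + 1) = v.1 + 1 + k := by omega
    have hs : step v true = (v.1 + 1, v.2) := rfl
    simp only [hs, h2, Nat.add_zero, Prod.mk.eta]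
    have h3 : (∑ r ∈ Finset.range k, f ((v.1 + (r + 1), v.2), (v.1 + (r + 1) + 1, v.2)))
        = ∑ r ∈ Finset.range k, f ((v.1 + 1 + r, v.2), (v.1 + 1 + r + 1, v.2)) := by
      refine Finset.sum_congr rfl fun r _ => ?_
      rw [h1 r]
    rw [h3]
    ring

lemma pathSum_false (f : (ℕ × ℕ) × (ℕ × ℕ) → ℝ) :
    ∀ (n : ℕ) (v : ℕ × ℕ) (ms : List Bool),
    pathSum f v (List.replicate n false ++ ms) =
      (∑ t ∈ Finset.range n, f ((v.1, v.2 + t), (v.1, v.2 + t + 1)))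
        + pathSum f (v.1, v.2 + n) ms := by
  intro n
  induction n with
  | zero => intro v ms; simp
  | succ n ih =>
    intro v ms
    rw [List.replicate_succ, List.cons_append, pathSum, ih]
    rw [Finset.sum_range_succ']
    have h1 : ∀ t : ℕ, v.2 + (t + 1) = v.2 + 1 + t := fun t => by omega
    have h2 : v.2 + (n + 1) = v.2 + 1 + n := by omega
    have hs : step v false = (v.1, v.2 + 1) := rfl
    simp only [hs, h2, Nat.add_zero, Prod.mk.eta]
    have h3 : (∑ t ∈ Finset.range n, f ((v.1, v.2 + (t + 1)), (v.1, v.2 + (t + 1) + 1)))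
        = ∑ t ∈ Finset.range n, f ((v.1, v.2 + 1 + t), (v.1, v.2 + 1 + t + 1)) := by
      refine Finset.sum_congr rfl fun t _ => ?_
      rw [h1 t]
    rw [h3]
    ring

end Stmt17Aux

namespace Stmt17Aux

lemma pathSum_nil (f : (ℕ × ℕ) × (ℕ × ℕ) → ℝ) (v : ℕ × ℕ) : pathSum f v [] = 0 := rfl

lemma pathSum_true' (f : (ℕ × ℕ) × (ℕ × ℕ) → ℝ) (k x y : ℕ) (ms : List Bool) :
    pathSum f (x, y) (List.replicate k true ++ ms) =
      (∑ r ∈ Finset.range k, f ((x + r, y), (x + r + 1, y)))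
        + pathSum f (x + k, y) ms := pathSum_true f k (x, y) ms

lemma pathSum_false' (f : (ℕ × ℕ) × (ℕ × ℕ) → ℝ) (n x y : ℕ) (ms : List Bool) :
    pathSum f (x, y) (List.replicate n false ++ ms) =
      (∑ t ∈ Finset.range n, f ((x, y + t), (x, y + t + 1)))
        + pathSum f (x, y + n) ms := pathSum_false f n (x, y) ms

end Stmt17Aux

/-- Two linear cost vectors on `G_{p,q}` vanishing outside `J` that give every `s`-`t`
path the same cost must be equal. -/
theorem stmt_17 (p q : ℕ) (hp : 2 ≤ p) (hq : 2 ≤ q)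
    (c d : (ℕ × ℕ) × (ℕ × ℕ) → ℝ)
    (hcJ : ∀ e ∉ gridJ p q, c e = 0) (hdJ : ∀ e ∉ gridJ p q, d e = 0)
    (h : ∀ P, IsPath (gridArc p q) (0, 0) (p - 1, q - 1) P →
      linCost c P = linCost d P) :
    c = d := by
  set f : (ℕ × ℕ) × (ℕ × ℕ) → ℝ := fun e => c e - d e with hfdef
  have hfe : ∀ e, f e = c e - d e := fun e => rfl
  have hf0 : ∀ e ∉ gridJ p q, f e = 0 := by
    intro e he; rw [hfe, hcJ e he, hdJ e he]; ring
  have hsum : ∀ l : List ((ℕ × ℕ) × (ℕ × ℕ)),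
      (l.map f).sum = (l.map c).sum - (l.map d).sum := by
    intro l; induction l with
    | nil => simp
    | cons a l ih => simp [ih, hfe]; ring
  have hzero : ∀ ms : List Bool, ms.count true = p - 1 → ms.count false = q - 1 →
      Stmt17Aux.pathSum f (0, 0) ms = 0 := by
    intro ms h1 h2
    have hPath : IsPath (gridArc p q) (0, 0) (p - 1, q - 1) (Stmt17Aux.route (0, 0) ms) := by
      refine ⟨?_, Stmt17Aux.route_head _ _, ?_, Stmt17Aux.route_nodup _ _, ?_⟩
      · rw [Stmt17Aux.route_length]
        have := List.count_le_length (a := true) (l := ms)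
        omega
      · rw [Stmt17Aux.route_getLast]; simp [h1, h2]
      · exact Stmt17Aux.route_chain_arc p q ms (0, 0)
          (by simp [h1]; omega) (by simp [h2]; omega)
    have hc := h _ hPath
    have hl := Stmt17Aux.linCost_route f ms (0, 0)
    have h3 : linCost f (Stmt17Aux.route (0, 0) ms) =
        linCost c (Stmt17Aux.route (0, 0) ms) - linCost d (Stmt17Aux.route (0, 0) ms) :=
      hsum _
    rw [← hl, h3, hc]; ring
  have hf_h : ∀ x y : ℕ, ¬(x = 0 ∧ y = 0) → f ((x, y), (x, y + 1)) = 0 := by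
    intro x y hxy; apply hf0; intro hm
    simp only [gridJ, Set.mem_setOf_eq] at hm
    rcases hm with ⟨i, j, hi, hj, he⟩ | he <;> simp [Prod.ext_iff] at he <;> omega
  have hf_last : ∀ x : ℕ, f ((x, q - 1), (x + 1, q - 1)) = 0 := by
    intro x; apply hf0; intro hm
    simp only [gridJ, Set.mem_setOf_eq] at hm
    rcases hm with ⟨i, j, hi, hj, he⟩ | he <;> simp [Prod.ext_iff] at he <;> omega
  have h00 : f ((0, 0), (0, 1)) = 0 := by
    have h0 := hzero (List.replicate (q - 1) false ++ (List.replicate (p - 1) true ++ []))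
      (by simp [List.count_append, List.count_replicate])
      (by simp [List.count_append, List.count_replicate])
    rw [Stmt17Aux.pathSum_false', Stmt17Aux.pathSum_true'] at h0
    simp only [Nat.zero_add, Stmt17Aux.pathSum_nil] at h0
    have e2 : (∑ r ∈ Finset.range (p - 1), f ((r, q - 1), (r + 1, q - 1))) = 0 :=
      Finset.sum_eq_zero fun r _ => hf_last r
    have e1 : (∑ t ∈ Finset.range (q - 1), f ((0, t), (0, t + 1))) = f ((0, 0), (0, 1)) := by
      have := Finset.sum_eq_single_of_mem (s := Finset.range (q - 1))
        (f := fun t => f ((0, t), (0, t + 1))) 0 (Finset.mem_range.2 (by omega))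
        (fun t _ ht => hf_h 0 t (fun hc => ht hc.2))
      simpa using this
    rw [e1, e2] at h0; linarith
  have hT : ∀ j, j + 1 < q → ∀ k, k ≤ p - 1 →
      (∑ r ∈ Finset.range k, f ((r, j), (r + 1, j))) = 0 := by
    intro j hj k hk
    have h0 := hzero (List.replicate j false ++ (List.replicate k true ++
        (List.replicate (q - 1 - j) false ++ (List.replicate (p - 1 - k) true ++ []))))
      (by simp [List.count_append, List.count_replicate]; omega)
      (by simp [List.count_append, List.count_replicate]; omega)
    rw [Stmt17Aux.pathSum_false', Stmt17Aux.pathSum_true',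
        Stmt17Aux.pathSum_false', Stmt17Aux.pathSum_true'] at h0
    simp only [Nat.zero_add, Stmt17Aux.pathSum_nil] at h0
    have hq1 : j + (q - 1 - j) = q - 1 := by omega
    simp only [hq1] at h0
    have e1 : (∑ t ∈ Finset.range j, f ((0, t), (0, t + 1))) = 0 := by
      refine Finset.sum_eq_zero fun t _ => ?_
      rcases Nat.eq_zero_or_pos t with rfl | ht
      · simpa using h00
      · exact hf_h 0 t (fun hc => by omega)
    have e3 : (∑ t ∈ Finset.range (q - 1 - j), f ((k, j + t), (k, j + t + 1))) = 0 := by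
      refine Finset.sum_eq_zero fun t _ => ?_
      by_cases hk0 : k = 0 ∧ j + t = 0
      · rw [hk0.1, hk0.2]; simpa using h00
      · exact hf_h k (j + t) hk0
    have e4 : (∑ r ∈ Finset.range (p - 1 - k), f ((k + r, q - 1), (k + r + 1, q - 1))) = 0 :=
      Finset.sum_eq_zero fun r _ => hf_last (k + r)
    rw [e1, e3, e4] at h0
    linarith
  funext e
  by_cases he : e ∈ gridJ p q
  · simp only [gridJ, Set.mem_setOf_eq] at he
    rcases he with ⟨i, j, hi, hj, rfl⟩ | rfl
    · have h1 := hT j hj (i + 1) (by omega)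
      rw [Finset.sum_range_succ] at h1
      have h2 := hT j hj i (by omega)
      have h3 : f ((i, j), (i + 1, j)) = 0 := by linarith
      rw [hfe] at h3; linarith
    · rw [hfe] at h00; linarith
  · rw [hcJ e he, hdJ e he]
end

section
/- Let q ≥ 2 and let I = (G_{2,q}, s, t, c, Q) be any QSPP instance on the directed grid graph G_{2,q} with s = v_{1,1}, t = v_{2,q}, nonnegative linear costs c and nonnegative symmetric interaction cost matrix Q with zero diagonal. Then I is linearizable. -/
/-- `n` consecutive row-1 vertices starting at column `j`. -/
def row1 : ℕ → ℕ → List (ℕ × ℕ)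
  | _, 0 => []
  | j, n+1 => (1, j) :: row1 (j+1) n

/-- `n` consecutive row-0 vertices starting at column `j`. -/
def row0 : ℕ → ℕ → List (ℕ × ℕ)
  | _, 0 => []
  | j, n+1 => (0, j) :: row0 (j+1) n

lemma linCost_cons_cons {V : Type*} (c' : V × V → ℝ) (a b : V) (l : List V) :
    linCost c' (a :: b :: l) = c' (a, b) + linCost c' (b :: l) := by
  simp [linCost, arcsOf]

lemma lemA (q : ℕ) (hq : 1 ≤ q) : ∀ (P : List (ℕ × ℕ)) (j : ℕ),
    P.Chain' (gridArc 2 q) → P.head? = some (1, j) → P.getLast? = some (1, q-1) →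
    j < q ∧ P = row1 j (q - j) := by
  intro P
  induction P with
  | nil => intro j _ hh _; simp at hh
  | cons a rest ih =>
    intro j hch hh hl
    simp at hh; subst hh
    cases rest with
    | nil =>
      simp at hl
      have hj : j = q - 1 := hl
      subst hj
      constructor
      · omega
      · have : q - (q-1) = 1 := by omega
        rw [this]; rfl
    | cons b rest' =>
      simp only [List.Chain', List.isChain_cons_cons] at hch
      obtain ⟨harc, hch'⟩ := hch
      obtain ⟨h1, h2, hor⟩ := harc
      rcases hor with ⟨_, h3⟩ | ⟨hb, _⟩
      · omega
      · subst hb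
        rw [List.getLast?_cons_cons] at hl
        obtain ⟨hlt, heq⟩ := ih (j+1) hch' (by simp) hl
        refine ⟨by omega, ?_⟩
        have : q - j = (q - (j+1)) + 1 := by omega
        rw [this, row1, ← heq]

lemma lemB (q : ℕ) (hq : 1 ≤ q) : ∀ (P : List (ℕ × ℕ)) (j : ℕ),
    P.Chain' (gridArc 2 q) → P.head? = some (0, j) → P.getLast? = some (1, q-1) →
    ∃ k, j ≤ k ∧ k < q ∧ P = row0 j (k + 1 - j) ++ row1 k (q - k) := by
  intro P
  induction P with
  | nil => intro j _ hh _; simp at hh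
  | cons a rest ih =>
    intro j hch hh hl
    simp at hh; subst hh
    cases rest with
    | nil => simp at hl
    | cons b rest' =>
      simp only [List.Chain', List.isChain_cons_cons] at hch
      obtain ⟨harc, hch'⟩ := hch
      obtain ⟨h1, h2, hor⟩ := harc
      rw [List.getLast?_cons_cons] at hl
      rcases hor with ⟨hb, _⟩ | ⟨hb, h3⟩
      · subst hb
        obtain ⟨hlt, heq⟩ := lemA q hq (_ :: rest') j hch' (by simp) hl
        refine ⟨j, le_refl j, hlt, ?_⟩
        have : j + 1 - j = 1 := by omega
        rw [this, heq]
        have : q - j = (q - (j+1)) + 1 := by omega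
        rw [this]
        rw [this] at heq
        rw [row1] at heq ⊢
        simp [row0, ← heq]
      · subst hb
        obtain ⟨k, hjk, hkq, heq⟩ := ih (j+1) hch' (by simp) hl
        refine ⟨k, by omega, hkq, ?_⟩
        have h4 : k + 1 - j = (k + 1 - (j+1)) + 1 := by omega
        rw [h4, show row0 j (k + 1 - (j+1) + 1) = (0,j) :: row0 (j+1) (k + 1 - (j+1)) from rfl,
          List.cons_append, ← heq]

lemma lin_row1 (c' : (ℕ × ℕ) × (ℕ × ℕ) → ℝ) (hz : ∀ x y, c' ((1,x),(1,y)) = 0) :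
    ∀ n j, linCost c' (row1 j n) = 0 := by
  intro n
  induction n with
  | zero => intro j; simp [row1, linCost, arcsOf]
  | succ n ih =>
    intro j
    cases n with
    | zero => simp [row1, linCost, arcsOf]
    | succ m =>
      show linCost c' ((1,j) :: (1,j+1) :: row1 (j+2) m) = 0
      rw [linCost_cons_cons, hz]
      have := ih (j+1)
      rw [show row1 (j+1) (m+1) = (1,j+1) :: row1 (j+2) m from rfl] at this
      rw [this]; ring

lemma lin_junction (c' : (ℕ × ℕ) × (ℕ × ℕ) → ℝ) (hz : ∀ x y, c' ((0,x),(0,y)) = 0) :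
    ∀ m j k (L : List (ℕ × ℕ)),
      linCost c' (row0 j (m+1) ++ (1,k) :: L) =
        c' ((0, j+m), (1,k)) + linCost c' ((1,k) :: L) := by
  intro m
  induction m with
  | zero =>
    intro j k L
    show linCost c' ((0,j) :: (1,k) :: L) = _
    rw [linCost_cons_cons]
    norm_num
  | succ m ih =>
    intro j k L
    show linCost c' ((0,j) :: ((0,j+1) :: row0 (j+2) m) ++ (1,k) :: L) = _
    simp only [List.cons_append]
    rw [linCost_cons_cons, hz]
    have := ih (j+1) k L
    rw [show row0 (j+1) (m+1) = (0,j+1) :: row0 (j+2) m from rfl] at this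
    simp only [List.cons_append] at this
    rw [this]
    have : j + 1 + m = j + (m + 1) := by omega
    rw [this]; ring

/-- Every QSPP instance on the directed grid graph `G_{2,q}` (`q ≥ 2`) is linearizable. -/
theorem stmt_19 (q : ℕ) (hq : 2 ≤ q)
    (c : (ℕ × ℕ) × (ℕ × ℕ) → ℝ) (Q : ((ℕ × ℕ) × (ℕ × ℕ)) → ((ℕ × ℕ) × (ℕ × ℕ)) → ℝ)
    (hc : ∀ e, 0 ≤ c e) (hQ0 : ∀ e f, 0 ≤ Q e f)
    (hQs : ∀ e f, Q e f = Q f e) (hQd : ∀ e, Q e e = 0) :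
    Linearizable (gridArc 2 q) (0, 0) (1, q - 1) c Q := by
  classical
  set g : ℕ → ℝ := fun k => cost c Q (row0 0 (k+1) ++ row1 k (q - k)) with hg
  have hgnonneg : ∀ k, 0 ≤ g k := by
    intro k
    apply add_nonneg
    · apply List.sum_nonneg
      intro x hx
      simp only [List.mem_map] at hx
      obtain ⟨e, _, rfl⟩ := hx
      apply List.sum_nonneg
      intro y hy
      simp only [List.mem_map] at hy
      obtain ⟨f, _, rfl⟩ := hy
      exact hQ0 e f
    · apply List.sum_nonneg
      intro x hx
      simp only [List.mem_map] at hx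
      obtain ⟨e, _, rfl⟩ := hx
      exact hc e
  refine ⟨fun e => if e.1.1 = 0 ∧ e.2.1 = 1 then g e.1.2 else 0, ?_, ?_⟩
  · intro e
    by_cases h : e.1.1 = 0 ∧ e.2.1 = 1
    · simp [h, hgnonneg]
    · simp [h]
  · intro P hP
    obtain ⟨hlen, hh, hl, hnd, hch⟩ := hP
    obtain ⟨k, _, hkq, hPeq⟩ := lemB q (by omega) P 0 hch hh hl
    subst hPeq
    set c' : (ℕ × ℕ) × (ℕ × ℕ) → ℝ := fun e => if e.1.1 = 0 ∧ e.2.1 = 1 then g e.1.2 else 0 with hc'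
    have hz0 : ∀ x y, c' ((0,x),(0,y)) = 0 := by intro x y; simp [hc']
    have hz1 : ∀ x y, c' ((1,x),(1,y)) = 0 := by intro x y; simp [hc']
    have hqk : q - k = (q - (k+1)) + 1 := by omega
    have h1 : row1 k (q - k) = (1,k) :: row1 (k+1) (q - (k+1)) := by rw [hqk]; rfl
    have h0 : k + 1 - 0 = k + 1 := by omega
    rw [h0, h1, lin_junction c' hz0 k 0 k]
    rw [show linCost c' ((1,k) :: row1 (k+1) (q-(k+1))) = linCost c' (row1 k (q-k)) by rw [h1]]
    rw [lin_row1 c' hz1]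
    have : c' ((0, 0 + k), (1, k)) = g k := by simp [hc']
    rw [this, add_zero, hg]
    rw [← h1]
end
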